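/- The contravariant constructions Ω and Σ form an adjunction between the category LSS of locally small spaces with bounded continuous maps and the category LocS: the functor Ω : LSS → LocS, given on objects by Ω(X, L_X) = (L_X^wo, L_X) and on morphisms by sending a bounded continuous map f to the right Galois adjoint of the preimage frame homomorphism L_Y^wo → L_X^wo, is left adjoint to the functor Σ : LocS → LSS, given on objects by Σ(L, L_s) = (Spec(L), Δ_L(L_s)) and on morphisms by restricting a special localic map h_* : M → L to Spec(M) → Spec(L). -/

import Mathlib

open Set TopologicalSpace CategoryTheory

universe u



/-! ### Frames: spectra -/

/-- The set of non-unit primes of a frame. -/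
def SpecS (L : Type u) [Order.Frame L] : Set L :=
  {p | p ≠ ⊤ ∧ ∀ a b : L, p = a ⊓ b → p = a ∨ p = b}

/-- `DeltaS a = { p ∈ Spec L : a ≰ p }`. -/
def DeltaS {L : Type u} [Order.Frame L] (a : L) : Set (SpecS L) :=
  {p | ¬ a ≤ (p : L)}

variable {L M N : Type u} [Order.Frame L] [Order.Frame M] [Order.Frame N]

lemma SpecS.inf_le {p : L} (hp : p ∈ SpecS L) {a b : L} (h : a ⊓ b ≤ p) :
    a ≤ p ∨ b ≤ p := by
  have h1 : p = (p ⊔ a) ⊓ (p ⊔ b) := by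
    rw [← sup_inf_left, sup_eq_left.mpr h]
  rcases hp.2 _ _ h1 with h2 | h2
  · exact Or.inl (by rw [h2]; exact le_sup_right)
  · exact Or.inr (by rw [h2]; exact le_sup_right)

lemma DeltaS_bot : DeltaS (⊥ : L) = ∅ := by
  ext p; simp [DeltaS]

lemma DeltaS_top : DeltaS (⊤ : L) = univ := by
  ext p; simpa [DeltaS, top_le_iff] using p.2.1

lemma DeltaS_inf (a b : L) : DeltaS (a ⊓ b) = DeltaS a ∩ DeltaS b := by
  ext p
  constructor
  · intro hp
    constructor <;> · intro hle; exact hp (le_trans (by simp) hle)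
  · rintro ⟨h1, h2⟩ hle
    rcases SpecS.inf_le p.2 hle with h | h
    · exact h1 h
    · exact h2 h

lemma DeltaS_sup (a b : L) : DeltaS (a ⊔ b) = DeltaS a ∪ DeltaS b := by
  ext p
  constructor
  · intro hp
    by_cases ha : a ≤ (p : L)
    · exact Or.inr fun hb => hp (sup_le ha hb)
    · exact Or.inl ha
  · rintro (h | h) hle
    · exact h (le_trans le_sup_left hle)
    · exact h (le_trans le_sup_right hle)

lemma DeltaS_sSup (S : Set L) : DeltaS (sSup S) = ⋃ a ∈ S, DeltaS a := by
  ext p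
  simp only [DeltaS, mem_setOf_eq, mem_iUnion, sSup_le_iff, not_forall]

/-- The hull-kernel topology on the spectrum of a frame: the open sets are
exactly the sets of the form `DeltaS a`. -/
def specTop (L : Type u) [Order.Frame L] : TopologicalSpace (SpecS L) where
  IsOpen U := U ∈ Set.range (DeltaS (L := L))
  isOpen_univ := ⟨⊤, DeltaS_top⟩
  isOpen_inter := by
    rintro _ _ ⟨a, rfl⟩ ⟨b, rfl⟩
    exact ⟨a ⊓ b, DeltaS_inf a b⟩
  isOpen_sUnion := by
    intro S hS
    refine ⟨sSup {a | DeltaS a ∈ S}, ?_⟩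
    rw [DeltaS_sSup]
    apply Set.Subset.antisymm
    · intro p hp
      simp only [mem_iUnion] at hp ⊢
      obtain ⟨a, ha, hpa⟩ := hp
      exact ⟨_, ha, hpa⟩
    · intro p hp
      rcases hp with ⟨U, hU, hpU⟩
      obtain ⟨a, rfl⟩ := hS U hU
      simp only [mem_iUnion]
      exact ⟨a, hU, hpU⟩

/-! ### Right Galois adjoints -/

/-- The right Galois adjoint of a map between complete lattices. -/
def rAdj [CompleteLattice M] [CompleteLattice L] (h : L → M) : M → L :=
  fun m => sSup {l | h l ≤ m}

lemma gc_rAdj (h : FrameHom L M) : GaloisConnection ⇑h (rAdj ⇑h) := by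
  intro l m
  constructor
  · intro hl; exact le_sSup hl
  · intro hl
    calc h l ≤ h (rAdj (⇑h) m) := OrderHomClass.mono h hl
      _ ≤ m := by
          rw [rAdj, map_sSup]
          apply sSup_le
          rintro _ ⟨l', hl', rfl⟩
          exact hl'

lemma rAdj_id : rAdj (id : L → L) = id := by
  funext m
  exact le_antisymm (sSup_le fun _ h => h) (le_sSup le_rfl)

lemma rAdj_mem_SpecS (h : FrameHom L M) {p : M} (hp : p ∈ SpecS M) :
    rAdj ⇑h p ∈ SpecS L := by
  have gc := gc_rAdj h
  constructor
  · intro htop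
    apply hp.1
    rw [top_le_iff.symm]
    have : h ⊤ ≤ p := (gc ⊤ p).mpr (htop ▸ le_rfl)
    simpa using this
  · intro a b hab
    have hle : h a ⊓ h b ≤ p := by
      rw [← map_inf]
      exact (gc _ p).mpr (le_of_eq hab.symm)
    have h1 : rAdj ⇑h p ≤ a := hab ▸ inf_le_left
    have h2 : rAdj ⇑h p ≤ b := hab ▸ inf_le_right
    rcases SpecS.inf_le hp hle with hc | hc
    · exact Or.inl (le_antisymm h1 ((gc a p).mp hc))
    · exact Or.inr (le_antisymm h2 ((gc b p).mp hc))

/-! ### Way-below, continuous and spatial frames -/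

/-- `b` is way below `a`. -/
def WayBelow (b a : L) : Prop :=
  ∀ D : Set L, D.Nonempty → DirectedOn (· ≤ ·) D → a ≤ sSup D → ∃ d ∈ D, b ≤ d

/-- A continuous frame. -/
def IsContinuousFrame (L : Type u) [Order.Frame L] : Prop :=
  ∀ a : L, a = sSup {b | WayBelow b a}

/-- A spatial frame: every element is a meet of primes. -/
def IsSpatialFrame (L : Type u) [Order.Frame L] : Prop :=
  ∀ a : L, ∃ T ⊆ SpecS L, a = sInf T

/-! ### Dominating and compatible homomorphisms -/

/-- `h` is dominating with respect to the designated sublattices. -/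
def Dominating (sL : Set L) (sM : Set M) (h : L → M) : Prop :=
  ∀ m ∈ sM, ∃ l ∈ sL, h l ⊓ m = m

/-- `h` is compatible with respect to the designated sublattices. -/
def Compatible (sL : Set L) (sM : Set M) (h : L → M) : Prop :=
  ∀ l ∈ sL, ∀ m ∈ sM, h l ⊓ m ∈ sM



/-! ### Locally small spaces -/

/-- A locally small space: a set together with a smopology. -/
structure LSS : Type (u + 1) where
  X : Type u
  L : Set (Set X)
  empty_mem : ∅ ∈ L
  inter_mem : ∀ {A B : Set X}, A ∈ L → B ∈ L → A ∩ B ∈ L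
  union_mem : ∀ {A B : Set X}, A ∈ L → B ∈ L → A ∪ B ∈ L
  covers : ∀ x : X, ∃ A ∈ L, x ∈ A

namespace LSS

/-- The weakly open sets: unions of subfamilies of the smopology. -/
def wo (S : LSS.{u}) : Set (Set S.X) := {U | ∃ F ⊆ S.L, U = ⋃₀ F}

lemma mem_wo_iff {S : LSS.{u}} {U : Set S.X} :
    U ∈ S.wo ↔ ∀ x ∈ U, ∃ A ∈ S.L, x ∈ A ∧ A ⊆ U := by
  constructor
  · rintro ⟨F, hF, rfl⟩ x hx
    obtain ⟨A, hA, hxA⟩ := hx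
    exact ⟨A, hF hA, hxA, fun y hy => ⟨A, hA, hy⟩⟩
  · intro h
    refine ⟨{A | A ∈ S.L ∧ A ⊆ U}, fun A hA => hA.1, ?_⟩
    apply Set.Subset.antisymm
    · intro x hx
      obtain ⟨A, hA, hxA, hAU⟩ := h x hx
      exact ⟨A, ⟨hA, hAU⟩, hxA⟩
    · rintro x ⟨A, ⟨_, hAU⟩, hxA⟩
      exact hAU hxA

lemma L_subset_wo (S : LSS.{u}) : S.L ⊆ S.wo := by
  intro A hA
  exact ⟨{A}, by simpa using hA, by simp⟩

/-- The topology of weakly open sets. -/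
def top (S : LSS.{u}) : TopologicalSpace S.X where
  IsOpen U := U ∈ S.wo
  isOpen_univ := mem_wo_iff.mpr fun x _ => by
    obtain ⟨A, hA, hxA⟩ := S.covers x
    exact ⟨A, hA, hxA, subset_univ A⟩
  isOpen_inter := by
    intro U V hU hV
    rw [mem_wo_iff] at hU hV ⊢
    rintro x ⟨hxU, hxV⟩
    obtain ⟨A, hA, hxA, hAU⟩ := hU x hxU
    obtain ⟨B, hB, hxB, hBV⟩ := hV x hxV
    exact ⟨A ∩ B, S.inter_mem hA hB, ⟨hxA, hxB⟩, inter_subset_inter hAU hBV⟩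
  isOpen_sUnion := by
    intro F hF
    rw [mem_wo_iff]
    rintro x ⟨U, hU, hxU⟩
    obtain ⟨A, hA, hxA, hAU⟩ := mem_wo_iff.mp (hF U hU) x hxU
    exact ⟨A, hA, hxA, hAU.trans (subset_sUnion_of_mem hU)⟩

/-- The frame of weakly open sets. -/
abbrev O (S : LSS.{u}) : Type u := @Opens S.X S.top

noncomputable instance (S : LSS.{u}) : Order.Frame S.O :=
  letI := S.top
  inferInstanceAs (Order.Frame (Opens S.X))

lemma isOpen_iff_mem_wo {S : LSS.{u}} {U : Set S.X} :
    @IsOpen _ S.top U ↔ U ∈ S.wo := Iff.rfl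

/-- The exterior of a point: the union of all weakly open sets omitting it. -/
def extSet (S : LSS.{u}) (x : S.X) : Set S.X := ⋃₀ {U ∈ S.wo | x ∉ U}

lemma extSet_mem_wo (S : LSS.{u}) (x : S.X) : S.extSet x ∈ S.wo := by
  rw [mem_wo_iff]
  rintro y ⟨U, ⟨hUwo, hxU⟩, hyU⟩
  obtain ⟨A, hA, hyA, hAU⟩ := mem_wo_iff.mp hUwo y hyU
  exact ⟨A, hA, hyA, hAU.trans (subset_sUnion_of_mem ⟨hUwo, hxU⟩)⟩

/-- The exterior of a point, as an open set. -/
def extO (S : LSS.{u}) (x : S.X) : S.O :=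
  letI := S.top
  ⟨S.extSet x, S.extSet_mem_wo x⟩

end LSS

/-! ### Bounded and continuous maps -/

/-- `f` is a bounded map with respect to the given smopologies. -/
def IsBdd {X Y : Type*} (LX : Set (Set X)) (LY : Set (Set Y)) (f : X → Y) : Prop :=
  ∀ W ∈ LX, ∃ V ∈ LY, W ⊆ f ⁻¹' V

/-- `f` is a continuous map of locally small spaces. -/
def IsCt {X Y : Type*} (LX : Set (Set X)) (LY : Set (Set Y)) (f : X → Y) : Prop :=
  ∀ V ∈ LY, ∀ W ∈ LX, f ⁻¹' V ∩ W ∈ LX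



/-! ### Frames with designated sup-generating sublattices -/

/-- A frame together with a sup-generating sublattice with zero. -/
structure FrmS : Type (u + 1) where
  L : Type u
  [str : Order.Frame L]
  s : Set L
  bot_mem : ⊥ ∈ s
  inf_mem : ∀ {a b : L}, a ∈ s → b ∈ s → a ⊓ b ∈ s
  sup_mem : ∀ {a b : L}, a ∈ s → b ∈ s → a ⊔ b ∈ s
  supGen : ∀ a : L, ∃ T ⊆ s, a = sSup T

attribute [instance] FrmS.str

variable {L M N : Type u} [Order.Frame L] [Order.Frame M] [Order.Frame N]

lemma Dominating.compFH {sL : Set L} {sM : Set M} {sN : Set N}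
    (h : FrameHom L M) (k : FrameHom M N)
    (hd : Dominating sL sM ⇑h) (kd : Dominating sM sN ⇑k)
    (hc : Compatible sL sM ⇑h) : Dominating sL sN ⇑(k.comp h) := by
  intro n hn
  obtain ⟨m, hm, hkm⟩ := kd n hn
  obtain ⟨l, hl, hhl⟩ := hd m hm
  refine ⟨l, hl, ?_⟩
  have h1 : (k.comp h) l ⊓ n = k (h l) ⊓ (k m ⊓ n) := by rw [hkm]; rfl
  rw [h1, ← inf_assoc, ← map_inf, hhl, hkm]

lemma Compatible.compFH {sL : Set L} {sM : Set M} {sN : Set N}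
    (h : FrameHom L M) (k : FrameHom M N)
    (hcH : Compatible sL sM ⇑h) (kd : Dominating sM sN ⇑k)
    (kc : Compatible sM sN ⇑k) : Compatible sL sN ⇑(k.comp h) := by
  intro l hl n hn
  obtain ⟨m, hm, hkm⟩ := kd n hn
  have h1 : h l ⊓ m ∈ sM := hcH l hl m hm
  have h2 : k (h l ⊓ m) ⊓ n ∈ sN := kc _ h1 n hn
  have h3 : k (h l ⊓ m) ⊓ n = (k.comp h) l ⊓ n := by
    rw [map_inf, inf_assoc, hkm]; rfl
  rwa [h3] at h2

lemma rAdj_comp (h : FrameHom L M) (k : FrameHom M N) :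
    rAdj ⇑(k.comp h) = rAdj ⇑h ∘ rAdj ⇑k := by
  funext n
  exact (gc_rAdj (k.comp h)).u_unique ((gc_rAdj h).compose (gc_rAdj k))
    (fun a => rfl)

/-! ### The categories LSS, FrmSCat and LocS -/

/-- Bounded continuous maps: the morphisms of `LSS`. -/
abbrev LSSHom (S T : LSS.{u}) : Type u :=
  {f : S.X → T.X // IsBdd S.L T.L f ∧ IsCt S.L T.L f}

instance : Category LSS.{u} where
  Hom := LSSHom
  id S := ⟨id, fun W hW => ⟨W, hW, fun _ hx => hx⟩,
    fun V hV W hW => S.inter_mem hV hW⟩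
  comp {S T U} f g := ⟨g.1 ∘ f.1,
    fun W hW => by
      obtain ⟨V, hV, hWV⟩ := f.2.1 W hW
      obtain ⟨Z, hZ, hVZ⟩ := g.2.1 V hV
      exact ⟨Z, hZ, fun x hx => hVZ (hWV hx)⟩,
    fun Z hZ W hW => by
      obtain ⟨V, hV, hWV⟩ := f.2.1 W hW
      have h1 : g.1 ⁻¹' Z ∩ V ∈ T.L := g.2.2 Z hZ V hV
      have h2 : f.1 ⁻¹' (g.1 ⁻¹' Z ∩ V) ∩ W ∈ S.L := f.2.2 _ h1 W hW
      have h3 : (g.1 ∘ f.1) ⁻¹' Z ∩ W = f.1 ⁻¹' (g.1 ⁻¹' Z ∩ V) ∩ W := by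
        ext x
        constructor
        · rintro ⟨hxZ, hxW⟩; exact ⟨⟨hxZ, hWV hxW⟩, hxW⟩
        · rintro ⟨⟨hxZ, _⟩, hxW⟩; exact ⟨hxZ, hxW⟩
      rw [h3]; exact h2⟩
  id_comp f := Subtype.ext rfl
  comp_id f := Subtype.ext rfl
  assoc f g h := Subtype.ext rfl

/-- The category of frames with sup-generating sublattices and dominating
compatible frame homomorphisms. -/
structure FrmSCat : Type (u + 1) where
  P : FrmS.{u}

/-- Dominating compatible frame homomorphisms: the morphisms of `FrmSCat`. -/
abbrev FrmSHom (A B : FrmSCat.{u}) : Type u :=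
  {h : FrameHom A.P.L B.P.L //
    Dominating A.P.s B.P.s ⇑h ∧ Compatible A.P.s B.P.s ⇑h}

instance : Category FrmSCat.{u} where
  Hom := FrmSHom
  id A := ⟨FrameHom.id _, fun m hm => ⟨m, hm, inf_idem m⟩,
    fun l hl m hm => A.P.inf_mem hl hm⟩
  comp {A B C} h k := ⟨k.1.comp h.1,
    Dominating.compFH h.1 k.1 h.2.1 k.2.1 h.2.2,
    Compatible.compFH h.1 k.1 h.2.2 k.2.1 k.2.2⟩
  id_comp f := Subtype.ext (by ext a; rfl)
  comp_id f := Subtype.ext (by ext a; rfl)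
  assoc f g h := Subtype.ext (by ext a; rfl)

/-- The category of frames with sup-generating sublattices and special localic
maps (right Galois adjoints of dominating compatible frame homomorphisms). -/
structure LocS : Type (u + 1) where
  P : FrmS.{u}

/-- Special localic maps: the morphisms of `LocS`. -/
abbrev LocSHom (A B : LocS.{u}) : Type u :=
  {g : A.P.L → B.P.L // ∃ h : FrameHom B.P.L A.P.L,
    Dominating B.P.s A.P.s ⇑h ∧ Compatible B.P.s A.P.s ⇑h ∧ g = rAdj ⇑h}

instance : Category LocS.{u} where
  Hom := LocSHom
  id A := ⟨id, FrameHom.id _, fun m hm => ⟨m, hm, inf_idem m⟩,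
    fun l hl m hm => A.P.inf_mem hl hm, by
      have h1 : ⇑(FrameHom.id A.P.L) = (id : A.P.L → A.P.L) := rfl
      rw [h1, rAdj_id]⟩
  comp {A B C} f g := ⟨g.1 ∘ f.1, by
    obtain ⟨h1, h1d, h1c, hf⟩ := f.2
    obtain ⟨h2, h2d, h2c, hg⟩ := g.2
    refine ⟨h1.comp h2, Dominating.compFH h2 h1 h2d h1d h2c,
      Compatible.compFH h2 h1 h2c h1d h1c, ?_⟩
    rw [hf, hg, rAdj_comp]⟩
  id_comp f := Subtype.ext rfl
  comp_id f := Subtype.ext rfl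
  assoc f g h := Subtype.ext rfl

/-! ### The functor Ω : LSS ⥤ LocS -/

/-- The object part of `Ω`. -/
noncomputable abbrev OmegaObj (S : LSS.{u}) : FrmS.{u} where
  L := S.O
  s := {U : S.O | (U : Set S.X) ∈ S.L}
  bot_mem := by
    letI := S.top
    show ((⊥ : Opens S.X) : Set S.X) ∈ S.L
    simpa using S.empty_mem
  inf_mem := by
    letI := S.top
    intro a b ha hb
    show ((a ⊓ b : Opens S.X) : Set S.X) ∈ S.L
    rw [Opens.coe_inf]
    exact S.inter_mem ha hb
  sup_mem := by
    letI := S.top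
    intro a b ha hb
    show ((a ⊔ b : Opens S.X) : Set S.X) ∈ S.L
    rw [Opens.coe_sup]
    exact S.union_mem ha hb
  supGen := by
    letI := S.top
    intro U
    refine ⟨{V : Opens S.X | (V : Set S.X) ∈ S.L ∧ (V : Set S.X) ⊆ (U : Set S.X)},
      fun V hV => hV.1, ?_⟩
    apply Opens.ext
    rw [Opens.coe_sSup]
    apply Set.Subset.antisymm
    · intro x hx
      obtain ⟨A, hA, hxA, hAU⟩ := LSS.mem_wo_iff.mp U.2 x hx
      exact Set.mem_biUnion (show (⟨A, S.L_subset_wo hA⟩ : Opens S.X) ∈ _ from ⟨hA, hAU⟩) hxA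
    · intro x hx
      simp only [Set.mem_iUnion] at hx
      obtain ⟨V, ⟨⟨_, hVU⟩, hxV⟩⟩ := hx
      exact hVU hxV

lemma contW {S T : LSS.{u}} (f : S.X → T.X) (hc : IsCt S.L T.L f) :
    @Continuous S.X T.X S.top T.top f := by
  letI := S.top; letI := T.top
  rw [continuous_def]
  intro V hV
  rw [LSS.isOpen_iff_mem_wo] at hV ⊢
  rw [LSS.mem_wo_iff]
  intro x hx
  obtain ⟨A, hA, hfA, hAV⟩ := LSS.mem_wo_iff.mp hV (f x) hx
  obtain ⟨W, hW, hxW⟩ := S.covers x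
  exact ⟨f ⁻¹' A ∩ W, hc A hA W hW, ⟨hfA, hxW⟩, fun y hy => hAV hy.1⟩

/-- The preimage frame homomorphism `L^wo f` of a bounded continuous map. -/
noncomputable def preimFH {S T : LSS.{u}} (f : LSSHom S T) : FrameHom T.O S.O :=
  @Opens.comap S.X T.X S.top T.top (@ContinuousMap.mk S.X T.X S.top T.top f.1 (contW f.1 f.2.2))

lemma preimFH_coe {S T : LSS.{u}} (f : LSSHom S T) (V : T.O) :
    ((preimFH f V : S.O) : Set S.X) = f.1 ⁻¹' (V : Set T.X) := by
  letI := S.top; letI := T.top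
  exact Opens.coe_comap _ V

/-- The morphism part of `Ω`. -/
noncomputable def OmegaMap {S T : LSS.{u}} (f : LSSHom S T) :
    LocSHom ⟨OmegaObj S⟩ ⟨OmegaObj T⟩ :=
  ⟨rAdj ⇑(preimFH f), preimFH f,
    by
      letI := S.top
      letI := T.top
      intro m hm
      obtain ⟨V, hV, hmV⟩ := f.2.1 (m : Set S.X) hm
      refine ⟨⟨V, T.L_subset_wo hV⟩, hV, ?_⟩
      apply Opens.ext
      show ((preimFH f ⟨V, _⟩ ⊓ m : Opens S.X) : Set S.X) = (m : Set S.X)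
      rw [Opens.coe_inf, preimFH_coe]
      exact Set.inter_eq_self_of_subset_right hmV,
    by
      letI := S.top
      intro l hl m hm
      show ((preimFH f l ⊓ m : Opens S.X) : Set S.X) ∈ S.L
      rw [Opens.coe_inf, preimFH_coe]
      exact f.2.2 _ hl _ hm,
    rfl⟩

lemma preimFH_id (S : LSS.{u}) : preimFH (𝟙 S) = FrameHom.id S.O := by
  apply DFunLike.ext
  intro V
  letI := S.top
  apply Opens.ext
  rw [preimFH_coe]
  rfl

lemma preimFH_comp {S T U : LSS.{u}} (f : S ⟶ T) (g : T ⟶ U) :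
    preimFH (f ≫ g) = (preimFH f).comp (preimFH g) := by
  apply DFunLike.ext
  intro V
  letI := S.top
  apply Opens.ext
  rw [preimFH_coe]
  show _ = ((preimFH f (preimFH g V) : S.O) : Set S.X)
  rw [preimFH_coe, preimFH_coe]
  rfl

/-- The spectral functor `Ω : LSS ⥤ LocS`. -/
noncomputable def Omega : LSS.{u} ⥤ LocS.{u} where
  obj S := ⟨OmegaObj S⟩
  map f := OmegaMap f
  map_id S := by
    apply Subtype.ext
    show rAdj ⇑(preimFH (𝟙 S)) = id
    rw [preimFH_id]
    have h1 : ⇑(FrameHom.id S.O) = (id : S.O → S.O) := rfl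
    rw [h1, rAdj_id]
  map_comp {S T U} f g := by
    apply Subtype.ext
    show rAdj ⇑(preimFH (f ≫ g)) = rAdj ⇑(preimFH g) ∘ rAdj ⇑(preimFH f)
    rw [preimFH_comp, rAdj_comp]

/-! ### The functor Σ : LocS ⥤ LSS -/

/-- The object part of `Σ`: the spectrum with the smopology `Δ(L_s)`. -/
abbrev SigmaObj (P : LocS.{u}) : LSS.{u} where
  X := ↥(SpecS P.P.L)
  L := DeltaS '' P.P.s
  empty_mem := ⟨⊥, P.P.bot_mem, DeltaS_bot⟩
  inter_mem := by
    rintro _ _ ⟨a, ha, rfl⟩ ⟨b, hb, rfl⟩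
    exact ⟨a ⊓ b, P.P.inf_mem ha hb, DeltaS_inf a b⟩
  union_mem := by
    rintro _ _ ⟨a, ha, rfl⟩ ⟨b, hb, rfl⟩
    exact ⟨a ⊔ b, P.P.sup_mem ha hb, DeltaS_sup a b⟩
  covers := by
    intro p
    obtain ⟨T, hT, hsup⟩ := P.P.supGen ⊤
    by_contra hcon
    push_neg at hcon
    apply p.2.1
    apply top_le_iff.mp
    rw [hsup]
    apply sSup_le
    intro a ha
    by_contra hle
    exact (hcon (DeltaS a) ⟨a, hT ha, rfl⟩) hle

/-- The morphism part of `Σ`: the restriction of a special localic map to the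
spectra. -/
def SigmaMap {A B : LocS.{u}} (g : LocSHom A B) :
    LSSHom (SigmaObj A) (SigmaObj B) :=
  ⟨fun p => ⟨g.1 p.1, by
      obtain ⟨h, _, _, hg⟩ := g.2
      rw [hg]
      exact rAdj_mem_SpecS h p.2⟩,
    by
      rintro _ ⟨a, ha, rfl⟩
      obtain ⟨h, hdom, hcomp, hg⟩ := g.2
      obtain ⟨l, hl, hla⟩ := hdom a ha
      refine ⟨DeltaS l, ⟨l, hl, rfl⟩, ?_⟩
      intro p hpa
      show ¬ l ≤ g.1 p.1
      intro hle
      rw [hg] at hle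
      have h1 : h l ≤ (p : A.P.L) := (gc_rAdj h l p.1).mpr hle
      exact hpa (hla ▸ le_trans inf_le_left h1),
    by
      rintro _ ⟨d, hd, rfl⟩ _ ⟨e, he, rfl⟩
      obtain ⟨h, hdom, hcomp, hg⟩ := g.2
      refine ⟨h d ⊓ e, hcomp d hd e he, ?_⟩
      ext p
      constructor
      · intro hle
        constructor
        · show ¬ d ≤ g.1 p.1
          intro hdg
          rw [hg] at hdg
          have h4 : h d ≤ (p : A.P.L) := (gc_rAdj h d p.1).mpr hdg
          exact hle (le_trans inf_le_left h4)
        · intro heg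
          exact hle (le_trans inf_le_right heg)
      · rintro ⟨h1, h2⟩ hle
        rcases SpecS.inf_le p.2 hle with hc | hc
        · apply h1
          show d ≤ g.1 p.1
          rw [hg]
          exact (gc_rAdj h d p.1).mp hc
        · exact h2 hc⟩

/-- The spectral functor `Σ : LocS ⥤ LSS`. -/
def SigmaF : LocS.{u} ⥤ LSS.{u} where
  obj P := SigmaObj P
  map g := SigmaMap g
  map_id A := Subtype.ext (funext fun p => Subtype.ext rfl)
  map_comp f g := Subtype.ext (funext fun p => Subtype.ext rfl)

/-! ### Auxiliary: the hom-set bijection -/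

section AdjAux

variable {S : LSS.{u}} {A B : LocS.{u}}

lemma preim_delta_wo (f : LSSHom S (SigmaObj A)) (a : A.P.L) :
    f.1 ⁻¹' DeltaS a ∈ S.wo := by
  rw [LSS.mem_wo_iff]
  intro x hx
  obtain ⟨T, hT, hsup⟩ := A.P.supGen a
  have hax : ¬ a ≤ (f.1 x : A.P.L) := hx
  have hex : ∃ t ∈ T, ¬ t ≤ (f.1 x : A.P.L) := by
    by_contra hc; push_neg at hc
    exact hax (hsup ▸ sSup_le hc)
  obtain ⟨t, htT, htx⟩ := hex
  obtain ⟨W, hW, hxW⟩ := S.covers x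
  refine ⟨f.1 ⁻¹' DeltaS t ∩ W, f.2.2 _ ⟨t, hT htT, rfl⟩ W hW, ⟨htx, hxW⟩, ?_⟩
  rintro y ⟨hy, -⟩
  exact fun hle => hy (le_trans (le_sSup htT) (hsup ▸ hle))

/-- The preimage of `DeltaS a` as an open set. -/
noncomputable def preimO (f : LSSHom S (SigmaObj A)) (a : A.P.L) : S.O :=
  letI := S.top
  ⟨f.1 ⁻¹' DeltaS a, preim_delta_wo f a⟩

/-- The frame homomorphism `L → O(S)` induced by a bounded continuous map into
the spectrum. -/
noncomputable def preimFHs (f : LSSHom S (SigmaObj A)) : FrameHom A.P.L S.O where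
  toFun := preimO f
  map_inf' a b := by
    letI := S.top
    apply Opens.ext
    show f.1 ⁻¹' DeltaS (a ⊓ b) = f.1 ⁻¹' DeltaS a ∩ f.1 ⁻¹' DeltaS b
    rw [DeltaS_inf, Set.preimage_inter]
  map_top' := by
    letI := S.top
    apply Opens.ext
    show f.1 ⁻¹' DeltaS (⊤ : A.P.L) = (univ : Set S.X)
    rw [DeltaS_top]; simp
  map_sSup' T := by
    letI := S.top
    apply Opens.ext
    show f.1 ⁻¹' DeltaS (sSup T) = _
    rw [DeltaS_sSup, Opens.coe_sSup]
    ext x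
    simp only [Set.mem_preimage, Set.mem_iUnion]
    constructor
    · rintro ⟨a, ha, hx⟩
      exact ⟨_, ⟨a, ha, rfl⟩, hx⟩
    · rintro ⟨U, ⟨a, ha, rfl⟩, hx⟩
      exact ⟨a, ha, hx⟩

lemma preimFHs_coe (f : LSSHom S (SigmaObj A)) (a : A.P.L) :
    ((preimFHs f a : S.O) : Set S.X) = f.1 ⁻¹' DeltaS a := rfl

/-- One direction of the bijection: from bounded continuous maps into the
spectrum to special localic maps. -/
noncomputable def PsiHom (f : LSSHom S (SigmaObj A)) : LocSHom ⟨OmegaObj S⟩ A :=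
  ⟨rAdj ⇑(preimFHs f), preimFHs f,
    by
      intro m hm
      obtain ⟨V, hV, hmV⟩ := f.2.1 (m : Set S.X) hm
      obtain ⟨a, ha, rfl⟩ := hV
      refine ⟨a, ha, ?_⟩
      letI := S.top
      apply Opens.ext
      show ((preimFHs f a ⊓ m : Opens S.X) : Set S.X) = (m : Set S.X)
      rw [Opens.coe_inf, preimFHs_coe]
      exact Set.inter_eq_self_of_subset_right hmV,
    by
      intro a ha m hm
      letI := S.top
      show ((preimFHs f a ⊓ m : Opens S.X) : Set S.X) ∈ S.L
      rw [Opens.coe_inf, preimFHs_coe]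
      exact f.2.2 _ ⟨a, ha, rfl⟩ _ hm,
    rfl⟩

variable {L : Type u} [Order.Frame L]

/-- The point of `L` associated to a point of `S` along a frame homomorphism
`L → O(S)`. -/
def ptEl (h : FrameHom L S.O) (x : S.X) : L :=
  sSup {a | x ∉ (h a : Set S.X)}

lemma not_mem_h_pt (h : FrameHom L S.O) (x : S.X) :
    x ∉ (h (ptEl h x) : Set S.X) := by
  letI := S.top
  rw [ptEl, map_sSup]
  show x ∉ ((sSup (h '' {a | x ∉ (h a : Set S.X)}) : Opens S.X) : Set S.X)
  rw [Opens.coe_sSup]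
  simp only [Set.mem_iUnion]
  rintro ⟨U, ⟨a, ha, rfl⟩, hx⟩
  exact ha hx

lemma le_pt_iff (h : FrameHom L S.O) (x : S.X) (a : L) :
    a ≤ ptEl h x ↔ x ∉ (h a : Set S.X) := by
  constructor
  · intro hle hx
    have h1 : h a ≤ h (ptEl h x) := OrderHomClass.mono h hle
    exact not_mem_h_pt h x (h1 hx)
  · intro hx
    exact le_sSup hx

lemma pt_mem_SpecS (h : FrameHom L S.O) (x : S.X) : ptEl h x ∈ SpecS L := by
  constructor
  · intro htop
    apply not_mem_h_pt h x
    rw [htop, map_top]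
    letI := S.top
    show x ∈ ((⊤ : Opens S.X) : Set S.X)
    simp
  · intro a b hab
    have hx : x ∉ (h (a ⊓ b) : Set S.X) := hab ▸ not_mem_h_pt h x
    have hx' : x ∉ ((h a : Set S.X) ∩ (h b : Set S.X)) := by
      intro hc; apply hx
      rw [map_inf]
      letI := S.top
      exact (by rw [Opens.coe_inf]; exact hc :
        x ∈ ((h a ⊓ h b : Opens S.X) : Set S.X))
    have h1 : ptEl h x ≤ a := hab ▸ inf_le_left
    have h2 : ptEl h x ≤ b := hab ▸ inf_le_right
    by_cases hma : x ∈ (h a : Set S.X)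
    · have hmb : x ∉ (h b : Set S.X) := fun hmb => hx' ⟨hma, hmb⟩
      exact Or.inr (le_antisymm h2 ((le_pt_iff h x b).mpr hmb))
    · exact Or.inl (le_antisymm h1 ((le_pt_iff h x a).mpr hma))

/-- The underlying point map of the other direction of the bijection. -/
def PhiFun (h : FrameHom A.P.L S.O) : S.X → ↥(SpecS A.P.L) :=
  fun x => ⟨ptEl h x, pt_mem_SpecS h x⟩

lemma PhiFun_preim (h : FrameHom A.P.L S.O) (a : A.P.L) :
    PhiFun h ⁻¹' DeltaS a = (h a : Set S.X) := by
  ext x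
  show ¬ a ≤ ptEl h x ↔ x ∈ (h a : Set S.X)
  rw [le_pt_iff, not_not]

/-- The other direction of the bijection: from special localic maps to bounded
continuous maps into the spectrum. -/
noncomputable def PhiHom (g : LocSHom ⟨OmegaObj S⟩ A) : LSSHom S (SigmaObj A) :=
  ⟨PhiFun g.2.choose,
    by
      letI := S.top
      intro W hW
      obtain ⟨a, ha, hinf⟩ := g.2.choose_spec.1 (⟨W, S.L_subset_wo hW⟩ : S.O) hW
      refine ⟨DeltaS a, ⟨a, ha, rfl⟩, ?_⟩
      rw [PhiFun_preim]
      intro x hx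
      have : x ∈ ((g.2.choose a ⊓ ⟨W, S.L_subset_wo hW⟩ : S.O) : Set S.X) := by
        rw [hinf]; exact hx
      exact this.1,
    by
      letI := S.top
      rintro _ ⟨a, ha, rfl⟩ W hW
      rw [PhiFun_preim]
      exact g.2.choose_spec.2.1 a ha (⟨W, S.L_subset_wo hW⟩ : S.O) hW⟩

lemma PhiHom_val (g : LocSHom ⟨OmegaObj S⟩ A) (h : FrameHom A.P.L S.O)
    (hg : g.1 = rAdj ⇑h) (x : S.X) :
    ((PhiHom g).1 x : A.P.L) = ptEl h x := by
  have hspec := g.2.choose_spec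
  have hfun : ⇑(g.2.choose) = ⇑h := funext fun a =>
    (gc_rAdj g.2.choose).l_unique (gc_rAdj h)
      (fun b => by rw [← hspec.2.2, hg])
  show ptEl g.2.choose x = ptEl h x
  unfold ptEl
  rw [hfun]

lemma ptEl_comp {M : Type u} [Order.Frame M] (h : FrameHom L S.O)
    (k : FrameHom M L) (x : S.X) :
    ptEl (h.comp k) x = rAdj ⇑k (ptEl h x) := by
  apply le_antisymm
  · exact (gc_rAdj k _ _).mp
      ((le_pt_iff h x (k (ptEl (h.comp k) x))).mpr (not_mem_h_pt (h.comp k) x))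
  · apply (le_pt_iff (h.comp k) x _).mpr
    intro hx
    have h1 : k (rAdj ⇑k (ptEl h x)) ≤ ptEl h x := (gc_rAdj k).l_u_le _
    have h2 : h (k (rAdj ⇑k (ptEl h x))) ≤ h (ptEl h x) := OrderHomClass.mono h h1
    exact not_mem_h_pt h x (h2 hx)

end AdjAux

/-- **The spectral adjunction**: the functor `Ω : LSS ⥤ LocS` is left adjoint to
the functor `Σ : LocS ⥤ LSS`. -/
theorem spectral_adjunction : Nonempty (Omega.{u} ⊣ SigmaF.{u}) := by
  refine ⟨Adjunction.mkOfHomEquiv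
    { homEquiv := fun S A =>
        { toFun := PhiHom
          invFun := PsiHom
          left_inv := fun g => by
            apply Subtype.ext
            have hfun : ⇑(preimFHs (PhiHom g)) = ⇑(g.2.choose) := by
              funext a
              letI := S.top
              apply Opens.ext
              rw [preimFHs_coe]
              exact PhiFun_preim g.2.choose a
            show rAdj ⇑(preimFHs (PhiHom g)) = g.1
            rw [hfun]
            exact g.2.choose_spec.2.2.symm
          right_inv := fun f => by
            apply Subtype.ext
            funext x
            apply Subtype.ext
            rw [PhiHom_val (PsiHom f) (preimFHs f) rfl x]
            apply le_antisymm
            · have h1 : x ∉ ((preimFHs f (ptEl (preimFHs f) x) : S.O) : Set S.X) :=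
                not_mem_h_pt (preimFHs f) x
              change x ∉ f.1 ⁻¹' DeltaS (ptEl (preimFHs f) x) at h1
              exact not_not.mp h1
            · apply (le_pt_iff (preimFHs f) x _).mpr
              change x ∉ f.1 ⁻¹' DeltaS _
              exact fun hmem => hmem le_rfl }
      homEquiv_naturality_left_symm := fun {S' S A} k f => by
        apply Subtype.ext
        have hfun : ⇑(preimFHs (k ≫ f)) = ⇑((preimFH k).comp (preimFHs f)) := by
          funext a
          letI := S'.top
          apply Opens.ext
          rw [preimFHs_coe]
          show (f.1 ∘ k.1) ⁻¹' DeltaS a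
            = ((preimFH k (preimFHs f a) : S'.O) : Set S'.X)
          rw [preimFH_coe]
          rfl
        show rAdj ⇑(preimFHs (k ≫ f)) = rAdj ⇑(preimFHs f) ∘ rAdj ⇑(preimFH k)
        rw [hfun, rAdj_comp]
      homEquiv_naturality_right := fun {S A B} g t => by
        apply Subtype.ext
        funext x
        apply Subtype.ext
        obtain ⟨hg, ht⟩ := And.intro g.2.choose_spec t.2.choose_spec
        have hc : (g ≫ t).1 = rAdj ⇑(g.2.choose.comp t.2.choose) := by
          show t.1 ∘ g.1 = _
          rw [rAdj_comp t.2.choose g.2.choose]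
          exact congrArg₂ (· ∘ ·) ht.2.2 hg.2.2
        show ((PhiHom (g ≫ t)).1 x : B.P.L) = t.1 ((PhiHom g).1 x : A.P.L)
        rw [PhiHom_val (g ≫ t) (g.2.choose.comp t.2.choose) hc x]
        exact (ptEl_comp g.2.choose t.2.choose x).trans
          (congrFun ht.2.2 _).symm }⟩
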